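/- In the competitive-equilibrium setup derived from a Pareto-optimal allocation, if two goods j and j' are of the same type (every agent has identical utility for them), then their dual prices are equal: p_j = p_{j'}. -/
import Mathlib


def isPM {n : ℕ} (x : Fin n → Fin n → ℝ) : Prop :=
  (∀ i j, 0 ≤ x i j) ∧ (∀ i, ∑ j, x i j = 1) ∧ (∀ j, ∑ i, x i j = 1)

lemma price_le_aux {n : ℕ} (u x : Fin n → Fin n → ℝ)
    (α : Fin n → ℝ) (p q : Fin n → ℝ) (hx : isPM x)
    (hfeas : ∀ i j, α i * u i j ≤ q i + p j)
    (hcs : ∀ i j, 0 < x i j → q i + p j = α i * u i j)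
    (j j' : Fin n) (htype : ∀ i, u i j = u i j') :
    p j ≤ p j' := by
  obtain ⟨hnn, _, hcol⟩ := hx
  have hsum : ∑ i, x i j = 1 := hcol j
  have : ∃ i, 0 < x i j := by
    by_contra h
    push_neg at h
    have : ∀ i ∈ Finset.univ, x i j = 0 := fun i _ => le_antisymm (h i) (hnn i j)
    rw [Finset.sum_eq_zero this] at hsum
    norm_num at hsum
  obtain ⟨i, hi⟩ := this
  have h1 := hcs i j hi
  have h2 := hfeas i j'
  rw [← htype i] at h2
  linarith

theorem equal_goods_equal_prices {n : ℕ} (u x : Fin n → Fin n → ℝ)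
    (hu : ∀ i j, 0 ≤ u i j)
    (α : Fin n → ℝ) (hα : ∀ i, 0 < α i)
    (p q : Fin n → ℝ) (hp : ∀ j, 0 ≤ p j) (hq : ∀ i, 0 ≤ q i)
    (hx : isPM x)
    -- dual feasibility
    (hfeas : ∀ i j, α i * u i j ≤ q i + p j)
    -- complementary slackness
    (hcs : ∀ i j, 0 < x i j → q i + p j = α i * u i j)
    (j j' : Fin n)
    -- goods j and j' are of the same type
    (htype : ∀ i, u i j = u i j') :
    p j = p j' :=
  le_antisymm
    (price_le_aux u x α p q hx hfeas hcs j j' htype)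
    (price_le_aux u x α p q hx hfeas hcs j' j (fun i => (htype i).symm))
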